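/- Let D=(V,A) be a finite digraph with rational capacities u, source s, sink t, and let k ∈ ℕ with k ≤ |A|. Let S_k := {S ⊆ A : |S| = k} and Δ(S_k) := {z ∈ [0,1]^{S_k} : ∑_{S∈S_k} z_S = 1}. Then the maximum robust flow value equals the randomized network interdiction value: max_{x∈X} min_{S∈S_k} ∑_{P∈𝒫, P∩S=∅} x_P = min_{z∈Δ(S_k)} max_{x∈X} ∑_{P∈𝒫} (1 − ∑_{S∈S_k, P∩S≠∅} z_S)·x_P, and both optima are attained. -/

import Mathlib

open scoped BigOperators

/-- A directed multigraph: arcs `A` with tail and head maps into a vertex type `V`. -/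
structure MultiDigraph (V : Type) (A : Type) where
  tail : A → V
  head : A → V

namespace MultiDigraph

variable {V A : Type}

/-- `p` is (the arc list of) a simple directed `s`-`t`-path in `D`. -/
def IsPath (D : MultiDigraph V A) (s t : V) (p : List A) : Prop :=
  p ≠ [] ∧ List.Chain' (fun a b => D.head a = D.tail b) p ∧
    (p.map D.tail).head? = some s ∧ (p.map D.head).getLast? = some t ∧
    (p.map D.tail ++ [t]).Nodup

/-- The set of simple `s`-`t`-paths of `D`. -/
def pathSet (D : MultiDigraph V A) (s t : V) : Set (List A) := {p | D.IsPath s t p}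

/-- `x` is a feasible `s`-`t` path flow with respect to capacities `u`. -/
def IsFlow (D : MultiDigraph V A) (s t : V) (u : A → ℚ) (x : List A → ℚ) : Prop :=
  (∀ p, 0 ≤ x p) ∧ (∀ p, x p ≠ 0 → D.IsPath s t p) ∧
    ∀ a : A, (∑ᶠ p ∈ {p : List A | D.IsPath s t p ∧ a ∈ p}, x p) ≤ u a

/-- The value of a path flow. -/
noncomputable def value (D : MultiDigraph V A) (s t : V) (x : List A → ℚ) : ℚ :=
  ∑ᶠ p ∈ D.pathSet s t, x p

/-- `λ(x,S)`: the amount of flow on paths meeting `S`. -/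
noncomputable def loss (D : MultiDigraph V A) (s t : V) (x : List A → ℚ) (S : Set A) : ℚ :=
  ∑ᶠ p ∈ {p : List A | D.IsPath s t p ∧ ∃ a ∈ S, a ∈ p}, x p

/-- The amount of flow surviving the failure of `S`. -/
noncomputable def survival (D : MultiDigraph V A) (s t : V) (x : List A → ℚ) (S : Set A) : ℚ :=
  ∑ᶠ p ∈ {p : List A | D.IsPath s t p ∧ ∀ a ∈ S, a ∉ p}, x p

/-- A feasible multicommodity path flow meeting all demands exactly. -/
def IsMultiFlow {K : Type} (D : MultiDigraph V A) (u : A → ℚ)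
    (src snk : K → V) (dem : K → ℚ) (x : K → List A → ℚ) : Prop :=
  (∀ i p, 0 ≤ x i p) ∧ (∀ i p, x i p ≠ 0 → D.IsPath (src i) (snk i) p) ∧
    (∀ a : A,
      (∑ᶠ i : K, ∑ᶠ p ∈ {p : List A | D.IsPath (src i) (snk i) p ∧ a ∈ p}, x i p) ≤ u a) ∧
    (∀ i : K, (∑ᶠ p ∈ D.pathSet (src i) (snk i), x i p) = dem i)

/-- `λ(x,S)` for a multicommodity flow. -/
noncomputable def multiLoss {K : Type} (D : MultiDigraph V A)
    (src snk : K → V) (x : K → List A → ℚ) (S : Set A) : ℚ :=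
  ∑ᶠ i : K, ∑ᶠ p ∈ {p : List A | D.IsPath (src i) (snk i) p ∧ ∃ a ∈ S, a ∈ p}, x i p

end MultiDigraph

/-- `S` is a legal failure scenario for compatibility graph `H` and budget `k`:
a clique of `H` of cardinality at most `k`. -/
def cliqueScenario {A : Type} (H : SimpleGraph A) (k : ℕ) (S : Set A) : Prop :=
  S.Finite ∧ S.ncard ≤ k ∧ H.IsClique S

namespace MRF
open Finset


open Finset

lemma sum_indicator_mul {m : Type} [Fintype m] [DecidableEq m] (z : m) (w : ℚ) (c : m → ℚ) :
    ∑ i, (if z = i then w else 0) * c i = w * c z := by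
  rw [Finset.sum_eq_single z]
  · simp
  · intro i _ hi; simp [Ne.symm hi]
  · simp

lemma swap_mul {m r' : Type} [Fintype m] [Fintype r'] (y : r' → ℚ) (co : r' → m → ℚ) (c : m → ℚ) :
    ∑ i, (∑ r, y r * co r i) * c i = ∑ r, y r * ∑ i, co r i * c i := by
  simp only [Finset.sum_mul, Finset.mul_sum]
  rw [Finset.sum_comm]
  exact Finset.sum_congr rfl fun r _ => Finset.sum_congr rfl fun i _ => by ring

lemma exists_sep {N P : Type} [Fintype N] [Fintype P] (lo : N → ℚ) (hi : P → ℚ)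
    (h : ∀ q p, lo q ≤ hi p) : ∃ t, (∀ q, lo q ≤ t) ∧ ∀ p, t ≤ hi p := by
  rcases isEmpty_or_nonempty N with hN | hN
  · rcases isEmpty_or_nonempty P with hP | hP
    · exact ⟨0, fun q => (hN.false q).elim, fun p => (hP.false p).elim⟩
    · exact ⟨Finset.univ.inf' Finset.univ_nonempty hi,
        fun q => (hN.false q).elim,
        fun p => Finset.inf'_le _ (Finset.mem_univ p)⟩
  · refine ⟨Finset.univ.sup' Finset.univ_nonempty lo,
      fun q => Finset.le_sup' _ (Finset.mem_univ q), fun p => ?_⟩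
    exact Finset.sup'_le _ _ fun q _ => h q p

theorem farkas (n : ℕ) : ∀ {m : Type} [Fintype m] (M : m → Fin n → ℚ) (b : m → ℚ),
    (∃ x : Fin n → ℚ, ∀ i, ∑ j, M i j * x j ≤ b i) ∨
    (∃ y : m → ℚ, (∀ i, 0 ≤ y i) ∧ (∀ j, ∑ i, y i * M i j = 0) ∧ ∑ i, y i * b i < 0) := by
  induction n with
  | zero =>
    intro m _ M b
    by_cases hb : ∀ i, 0 ≤ b i
    · exact Or.inl ⟨fun _ => 0, fun i => by simpa using hb i⟩
    · push_neg at hb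
      obtain ⟨i₀, hi₀⟩ := hb
      classical
      refine Or.inr ⟨fun i => if i₀ = i then 1 else 0, ?_, ?_, ?_⟩
      · intro i; dsimp only; split <;> norm_num
      · exact fun j => j.elim0
      · rw [sum_indicator_mul]; linarith
  | succ n ih =>
    intro m _ M b
    classical
    set ℓ : Fin (n+1) := Fin.last n with hl
    set M' : ({i : m // M i ℓ = 0} ⊕ {i : m // 0 < M i ℓ} × {i : m // M i ℓ < 0}) → Fin n → ℚ :=
      Sum.elim (fun z j => M z.1 j.castSucc)
        (fun pq j => (-M pq.2.1 ℓ) * M pq.1.1 j.castSucc + M pq.1.1 ℓ * M pq.2.1 j.castSucc)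
      with hM'
    set b' : ({i : m // M i ℓ = 0} ⊕ {i : m // 0 < M i ℓ} × {i : m // M i ℓ < 0}) → ℚ :=
      Sum.elim (fun z => b z.1)
        (fun pq => (-M pq.2.1 ℓ) * b pq.1.1 + M pq.1.1 ℓ * b pq.2.1)
      with hb'
    rcases ih M' b' with ⟨x', hx'⟩ | ⟨y', hy0, hycol, hyb⟩
    · -- construct x by choosing value t for last variable
      left
      set Sf : m → ℚ := fun i => ∑ j : Fin n, M i j.castSucc * x' j with hSf
      set lo : {i : m // M i ℓ < 0} → ℚ := fun q => (b q.1 - Sf q.1) / M q.1 ℓ with hlo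
      set hi : {i : m // 0 < M i ℓ} → ℚ := fun p => (b p.1 - Sf p.1) / M p.1 ℓ with hhi
      have hsep : ∀ q p, lo q ≤ hi p := by
        intro q p
        have hc := hx' (Sum.inr (p, q))
        simp only [hM', hb', Sum.elim_inr] at hc
        have hsum : ∑ j : Fin n, ((-M q.1 ℓ) * M p.1 j.castSucc + M p.1 ℓ * M q.1 j.castSucc) * x' j
            = (-M q.1 ℓ) * Sf p.1 + M p.1 ℓ * Sf q.1 := by
          rw [hSf]; dsimp only; rw [Finset.mul_sum, Finset.mul_sum, ← Finset.sum_add_distrib]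
          exact Finset.sum_congr rfl fun j _ => by ring
        rw [hsum] at hc
        have hq := q.2
        have hp := p.2
        rw [hlo, hhi]; dsimp only
        rw [div_le_iff_of_neg hq, div_mul_eq_mul_div, div_le_iff₀ hp]
        nlinarith [hc]
      obtain ⟨t, hloT, hhiT⟩ := exists_sep lo hi hsep
      refine ⟨Fin.snoc x' t, fun i => ?_⟩
      have hsplit : ∑ j : Fin (n+1), M i j * (Fin.snoc x' t : Fin (n+1) → ℚ) j
          = Sf i + M i ℓ * t := by
        rw [Fin.sum_univ_castSucc]
        simp [Fin.snoc_castSucc, Fin.snoc_last, hSf, hl]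
      rw [hsplit]
      rcases lt_trichotomy (M i ℓ) 0 with hneg | hzero | hpos
      · have h1 := hloT ⟨i, hneg⟩
        rw [hlo] at h1; dsimp only at h1
        rw [div_le_iff_of_neg hneg] at h1
        linarith
      · have h1 := hx' (Sum.inl ⟨i, hzero⟩)
        simp only [hM', hb', Sum.elim_inl] at h1
        rw [hzero]
        simp only [hSf]
        linarith [h1]
      · have h1 := hhiT ⟨i, hpos⟩
        rw [hhi] at h1; dsimp only at h1
        rw [le_div_iff₀ hpos] at h1
        linarith
    · -- construct dual certificate
      right
      set coeff : ({i : m // M i ℓ = 0} ⊕ {i : m // 0 < M i ℓ} × {i : m // M i ℓ < 0}) → m → ℚ :=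
        Sum.elim (fun z i => if z.1 = i then 1 else 0)
          (fun pq i => (if pq.1.1 = i then -M pq.2.1 ℓ else 0) + (if pq.2.1 = i then M pq.1.1 ℓ else 0))
        with hcoeff
      have coeff_nonneg : ∀ r i, 0 ≤ coeff r i := by
        rintro (z | ⟨p, q⟩) i <;> simp only [hcoeff, Sum.elim_inl, Sum.elim_inr]
        · split <;> norm_num
        · have hq := q.2; have hp := p.2
          apply add_nonneg <;> (split <;> linarith)
      have key : ∀ (c : m → ℚ) r, ∑ i, coeff r i * c i =
          Sum.elim (fun z : {i : m // M i ℓ = 0} => c z.1)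
            (fun pq : {i : m // 0 < M i ℓ} × {i : m // M i ℓ < 0} =>
              (-M pq.2.1 ℓ) * c pq.1.1 + M pq.1.1 ℓ * c pq.2.1) r := by
        intro c r
        rcases r with z | ⟨p, q⟩ <;> simp only [hcoeff, Sum.elim_inl, Sum.elim_inr]
        · simpa using sum_indicator_mul z.1 1 c
        · simp only [add_mul, Finset.sum_add_distrib]
          rw [sum_indicator_mul, sum_indicator_mul]
      refine ⟨fun i => ∑ r, y' r * coeff r i, ?_, ?_, ?_⟩
      · intro i
        exact Finset.sum_nonneg fun r _ => mul_nonneg (hy0 r) (coeff_nonneg r i)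
      · intro j
        rw [swap_mul]
        induction j using Fin.lastCases with
        | last =>
          rw [show Fin.last n = ℓ from rfl]
          rw [Finset.sum_eq_zero]
          rintro (z | ⟨p, q⟩) _
          · rw [key]; simp [z.2]
          · rw [key]; simp only [Sum.elim_inr]; ring
        | cast j' =>
          have : ∀ r, ∑ i, coeff r i * M i j'.castSucc = M' r j' := by
            rintro (z | ⟨p, q⟩) <;> rw [key] <;> rfl
          rw [Finset.sum_congr rfl fun r _ => by rw [this r]]
          exact hycol j'
      · rw [swap_mul]
        have : ∀ r, ∑ i, coeff r i * b i = b' r := by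
          rintro (z | ⟨p, q⟩) <;> rw [key] <;> rfl
        rw [Finset.sum_congr rfl fun r _ => by rw [this r]]
        exact hyb

lemma sum_mul_indicator {m : Type} [Fintype m] [DecidableEq m] (z : m) (w : ℚ) (c : m → ℚ) :
    ∑ i, c i * (if i = z then w else 0) = c z * w := by
  rw [Finset.sum_eq_single z]
  · simp
  · intro i _ hi; simp [hi]
  · simp

theorem farkas' {κ m : Type} [Fintype κ] [Fintype m] (M : m → κ → ℚ) (b : m → ℚ) :
    (∃ x : κ → ℚ, ∀ i, ∑ j, M i j * x j ≤ b i) ∨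
    (∃ y : m → ℚ, (∀ i, 0 ≤ y i) ∧ (∀ j, ∑ i, y i * M i j = 0) ∧ ∑ i, y i * b i < 0) := by
  classical
  set e := Fintype.equivFin κ with he
  rcases farkas (Fintype.card κ) (fun i j => M i (e.symm j)) b with ⟨x, hx⟩ | ⟨y, h0, hcol, hb⟩
  · left
    refine ⟨fun j => x (e j), fun i => ?_⟩
    have := hx i
    rw [← Equiv.sum_comp e (fun j => M i (e.symm j) * x j)] at this
    simpa using this
  · right
    refine ⟨y, h0, fun j => ?_, hb⟩
    have := hcol (e j)
    simpa using this

def PFeas {ι κ : Type} [Fintype ι] [Fintype κ] (Mat : ι → κ → ℚ) (b : ι → ℚ) (x : κ → ℚ) : Prop :=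
  (∀ j, 0 ≤ x j) ∧ ∀ i, ∑ j, Mat i j * x j ≤ b i

def DFeas {ι κ : Type} [Fintype ι] [Fintype κ] (Mat : ι → κ → ℚ) (c : κ → ℚ) (y : ι → ℚ) : Prop :=
  (∀ i, 0 ≤ y i) ∧ ∀ j, c j ≤ ∑ i, y i * Mat i j

theorem weak_duality {ι κ : Type} [Fintype ι] [Fintype κ]
    (Mat : ι → κ → ℚ) (b : ι → ℚ) (c : κ → ℚ) {x : κ → ℚ} {y : ι → ℚ}
    (hx : PFeas Mat b x) (hy : DFeas Mat c y) :
    ∑ j, c j * x j ≤ ∑ i, y i * b i :=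
  calc ∑ j, c j * x j ≤ ∑ j, (∑ i, y i * Mat i j) * x j := by
        refine Finset.sum_le_sum fun j _ => mul_le_mul_of_nonneg_right (hy.2 j) (hx.1 j)
    _ = ∑ i, y i * ∑ j, Mat i j * x j := swap_mul y Mat x
    _ ≤ ∑ i, y i * b i :=
        Finset.sum_le_sum fun i _ => mul_le_mul_of_nonneg_left (hx.2 i) (hy.1 i)

theorem lp_strong_duality {ι κ : Type} [Fintype ι] [Fintype κ]
    (Mat : ι → κ → ℚ) (b : ι → ℚ) (c : κ → ℚ)
    (hP : ∃ x, PFeas Mat b x) (hD : ∃ y, DFeas Mat c y) :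
    ∃ x y, PFeas Mat b x ∧ DFeas Mat c y ∧ ∑ j, c j * x j = ∑ i, y i * b i := by
  classical
  set Big : (ι ⊕ (κ ⊕ (κ ⊕ (ι ⊕ Fin 1)))) → (κ ⊕ ι) → ℚ :=
    Sum.elim (fun i => Sum.elim (fun j => Mat i j) (fun _ => 0))
     (Sum.elim (fun j0 => Sum.elim (fun j => if j0 = j then (-1:ℚ) else 0) (fun _ => 0))
      (Sum.elim (fun j0 => Sum.elim (fun _ => (0:ℚ)) (fun i => -Mat i j0))
       (Sum.elim (fun i0 => Sum.elim (fun _ => (0:ℚ)) (fun i => if i0 = i then (-1:ℚ) else 0))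
        (fun _ => Sum.elim (fun j => -c j) (fun i => b i))))) with hBig
  set bBig : (ι ⊕ (κ ⊕ (κ ⊕ (ι ⊕ Fin 1)))) → ℚ :=
    Sum.elim b (Sum.elim (fun _ => 0) (Sum.elim (fun j0 => -c j0)
      (Sum.elim (fun _ => 0) (fun _ => 0)))) with hbBig
  rcases farkas' Big bBig with ⟨w, hw⟩ | ⟨yb, hy0, hcol, hbneg⟩
  · set x : κ → ℚ := fun j => w (Sum.inl j) with hxdef
    set y : ι → ℚ := fun i => w (Sum.inr i) with hydef
    have hx0 : ∀ j, 0 ≤ x j := by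
      intro j
      have := hw (Sum.inr (Sum.inl j))
      simpa [hBig, hbBig, Fintype.sum_sum_type, sum_indicator_mul] using this
    have hy0 : ∀ i, 0 ≤ y i := by
      intro i
      have := hw (Sum.inr (Sum.inr (Sum.inr (Sum.inl i))))
      simpa [hBig, hbBig, Fintype.sum_sum_type, sum_indicator_mul] using this
    have hxF : ∀ i, ∑ j, Mat i j * x j ≤ b i := by
      intro i
      have := hw (Sum.inl i)
      simpa [hBig, hbBig, Fintype.sum_sum_type] using this
    have hyF : ∀ j, c j ≤ ∑ i, y i * Mat i j := by
      intro j
      have h := hw (Sum.inr (Sum.inr (Sum.inl j)))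
      simp only [hBig, hbBig, Fintype.sum_sum_type, Sum.elim_inl, Sum.elim_inr,
        zero_mul, Finset.sum_const_zero, zero_add, add_zero] at h
      have h2 : ∑ i, -Mat i j * w (Sum.inr i) = -∑ i, y i * Mat i j := by
        rw [← Finset.sum_neg_distrib]
        exact Finset.sum_congr rfl fun i _ => by rw [hydef]; ring
      rw [h2] at h
      linarith
    have hobj : ∑ i, y i * b i ≤ ∑ j, c j * x j := by
      have h := hw (Sum.inr (Sum.inr (Sum.inr (Sum.inr 0))))
      simp only [hBig, hbBig, Fintype.sum_sum_type, Sum.elim_inl, Sum.elim_inr] at h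
      have h2 : ∑ j, -c j * w (Sum.inl j) = -∑ j, c j * x j := by
        rw [← Finset.sum_neg_distrib]
        exact Finset.sum_congr rfl fun j _ => by rw [hxdef]; ring
      have h3 : ∑ i, b i * w (Sum.inr i) = ∑ i, y i * b i :=
        Finset.sum_congr rfl fun i _ => by rw [hydef]; ring
      rw [h2, h3] at h
      linarith
    exact ⟨x, y, ⟨hx0, hxF⟩, ⟨hy0, hyF⟩,
      le_antisymm (weak_duality Mat b c ⟨hx0, hxF⟩ ⟨hy0, hyF⟩) hobj⟩
  · exfalso
    obtain ⟨x0, hx0⟩ := hP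
    obtain ⟨y0, hy0d⟩ := hD
    have hlam0 : 0 ≤ yb (Sum.inr (Sum.inr (Sum.inr (Sum.inr 0)))) := hy0 _
    have hwv0 : ∀ i, 0 ≤ yb (Sum.inl i) := fun i => hy0 _
    have hsv0 : ∀ j : κ, 0 ≤ yb (Sum.inr (Sum.inr (Sum.inl j))) := fun j => hy0 _
    have hcolx : ∀ j, ∑ i, yb (Sum.inl i) * Mat i j
        = yb (Sum.inr (Sum.inl j)) + yb (Sum.inr (Sum.inr (Sum.inr (Sum.inr 0)))) * c j := by
      intro j
      have h := hcol (Sum.inl j)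
      simp only [hBig, Fintype.sum_sum_type, Fin.sum_univ_one, Sum.elim_inl, Sum.elim_inr,
        mul_zero, Finset.sum_const_zero, add_zero, zero_add, sum_mul_indicator] at h
      linarith [h]
    have hcoly : ∀ i, ∑ j, yb (Sum.inr (Sum.inr (Sum.inl j))) * Mat i j
        = yb (Sum.inr (Sum.inr (Sum.inr (Sum.inr 0)))) * b i
          - yb (Sum.inr (Sum.inr (Sum.inr (Sum.inl i)))) := by
      intro i
      have h := hcol (Sum.inr i)
      simp only [hBig, Fintype.sum_sum_type, Fin.sum_univ_one, Sum.elim_inl, Sum.elim_inr,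
        mul_zero, Finset.sum_const_zero, add_zero, zero_add, sum_mul_indicator] at h
      have h2 : ∑ j : κ, yb (Sum.inr (Sum.inr (Sum.inl j))) * -Mat i j
          = -∑ j : κ, yb (Sum.inr (Sum.inr (Sum.inl j))) * Mat i j := by
        rw [← Finset.sum_neg_distrib]
        exact Finset.sum_congr rfl fun j _ => by ring
      rw [h2] at h
      linarith [h]
    have hbn : ∑ i, yb (Sum.inl i) * b i
        < ∑ j, c j * yb (Sum.inr (Sum.inr (Sum.inl j))) := by
      have h := hbneg
      simp only [hbBig, Fintype.sum_sum_type, Fin.sum_univ_one, Sum.elim_inl, Sum.elim_inr,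
        mul_zero, Finset.sum_const_zero, add_zero, zero_add] at h
      have h2 : ∑ j : κ, yb (Sum.inr (Sum.inr (Sum.inl j))) * -c j
          = -∑ j : κ, c j * yb (Sum.inr (Sum.inr (Sum.inl j))) := by
        rw [← Finset.sum_neg_distrib]
        exact Finset.sum_congr rfl fun j _ => by ring
      rw [h2] at h
      linarith [h]
    set lam : ℚ := yb (Sum.inr (Sum.inr (Sum.inr (Sum.inr 0)))) with hlam
    rcases eq_or_lt_of_le hlam0 with hl0 | hlpos
    · -- lam = 0
      have hAw : ∀ j, 0 ≤ ∑ i, yb (Sum.inl i) * Mat i j := by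
        intro j; rw [hcolx j, ← hl0]
        simpa using hy0 (Sum.inr (Sum.inl j))
      have hAs : ∀ i, ∑ j, yb (Sum.inr (Sum.inr (Sum.inl j))) * Mat i j ≤ 0 := by
        intro i; rw [hcoly i, ← hl0]
        simpa using hy0 (Sum.inr (Sum.inr (Sum.inr (Sum.inl i))))
      have h1 : ∑ j, c j * yb (Sum.inr (Sum.inr (Sum.inl j))) ≤ 0 :=
        calc ∑ j, c j * yb (Sum.inr (Sum.inr (Sum.inl j)))
            ≤ ∑ j, (∑ i, y0 i * Mat i j) * yb (Sum.inr (Sum.inr (Sum.inl j))) :=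
              Finset.sum_le_sum fun j _ => mul_le_mul_of_nonneg_right (hy0d.2 j) (hsv0 j)
          _ = ∑ i, y0 i * ∑ j, Mat i j * yb (Sum.inr (Sum.inr (Sum.inl j))) :=
              swap_mul y0 Mat _
          _ ≤ 0 := by
              apply Finset.sum_nonpos
              intro i _
              have he : ∑ j, Mat i j * yb (Sum.inr (Sum.inr (Sum.inl j)))
                  = ∑ j, yb (Sum.inr (Sum.inr (Sum.inl j))) * Mat i j :=
                Finset.sum_congr rfl fun j _ => mul_comm _ _
              rw [he]
              exact mul_nonpos_of_nonneg_of_nonpos (hy0d.1 i) (hAs i)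
      have h2 : 0 ≤ ∑ i, yb (Sum.inl i) * b i :=
        calc (0:ℚ) ≤ ∑ j, (∑ i, yb (Sum.inl i) * Mat i j) * x0 j :=
              Finset.sum_nonneg fun j _ => mul_nonneg (hAw j) (hx0.1 j)
          _ = ∑ i, yb (Sum.inl i) * ∑ j, Mat i j * x0 j := swap_mul _ Mat x0
          _ ≤ ∑ i, yb (Sum.inl i) * b i :=
              Finset.sum_le_sum fun i _ => mul_le_mul_of_nonneg_left (hx0.2 i) (hwv0 i)
      linarith
    · -- lam > 0
      set x' : κ → ℚ := fun j => yb (Sum.inr (Sum.inr (Sum.inl j))) / lam with hx'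
      set y' : ι → ℚ := fun i => yb (Sum.inl i) / lam with hy'
      have hx'F : PFeas Mat b x' := by
        constructor
        · intro j; exact div_nonneg (hsv0 j) hlam0
        · intro i
          have he : ∑ j, Mat i j * x' j
              = (∑ j, yb (Sum.inr (Sum.inr (Sum.inl j))) * Mat i j) / lam := by
            rw [Finset.sum_div]
            exact Finset.sum_congr rfl fun j _ => by rw [hx']; ring
          rw [he, div_le_iff₀ hlpos, hcoly i]
          have := hy0 (Sum.inr (Sum.inr (Sum.inr (Sum.inl i))))
          nlinarith [this]
      have hy'F : DFeas Mat c y' := by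
        constructor
        · intro i; exact div_nonneg (hwv0 i) hlam0
        · intro j
          have he : ∑ i, y' i * Mat i j = (∑ i, yb (Sum.inl i) * Mat i j) / lam := by
            rw [Finset.sum_div]
            exact Finset.sum_congr rfl fun i _ => by rw [hy']; ring
          rw [he, le_div_iff₀ hlpos, hcolx j]
          have := hy0 (Sum.inr (Sum.inl j))
          nlinarith [this]
      have hwd := weak_duality Mat b c hx'F hy'F
      have hxsum : ∑ j, c j * x' j = (∑ j, c j * yb (Sum.inr (Sum.inr (Sum.inl j)))) / lam := by
        rw [Finset.sum_div]
        exact Finset.sum_congr rfl fun j _ => by rw [hx']; ring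
      have hysum : ∑ i, y' i * b i = (∑ i, yb (Sum.inl i) * b i) / lam := by
        rw [Finset.sum_div]
        exact Finset.sum_congr rfl fun i _ => by rw [hy']; ring
      rw [hxsum, hysum, div_le_div_iff₀ hlpos hlpos] at hwd
      nlinarith [hwd, hbn]


variable {V A : Type}

lemma isPath_nodup (D : MultiDigraph V A) (s t : V) (p : List A)
    (h : D.IsPath s t p) : p.Nodup := by
  obtain ⟨-, -, -, -, h5⟩ := h
  exact (h5.of_append_left).of_map

lemma isPath_ne_nil (D : MultiDigraph V A) (s t : V) (p : List A)
    (h : D.IsPath s t p) : p ≠ [] := h.1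

lemma pathSet_finite [Fintype A] [DecidableEq A] (D : MultiDigraph V A) (s t : V) :
    (D.pathSet s t).Finite := by
  classical
  have hsub : D.pathSet s t ⊆ Set.range (fun l : {l : List A // l.Nodup} => l.1) :=
    fun p hp => ⟨⟨p, isPath_nodup D s t p hp⟩, rfl⟩
  exact (Set.finite_range _).subset hsub

lemma finsum_path_eq [Fintype A] [DecidableEq A] (D : MultiDigraph V A) (s t : V)
    [Fintype {p : List A // D.IsPath s t p}]
    (f : List A → ℚ) (Q : List A → Prop) [DecidablePred Q] :
    ∑ᶠ p ∈ {p : List A | D.IsPath s t p ∧ Q p}, f p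
      = ∑ p : {p : List A // D.IsPath s t p}, if Q p.1 then f p.1 else 0 := by
  classical
  set PF : Finset (List A) :=
    (Finset.univ : Finset {p : List A // D.IsPath s t p}).image Subtype.val with hPF
  have hmem : ∀ l, l ∈ PF ↔ D.IsPath s t l := by
    intro l
    simp only [hPF, Finset.mem_image, Finset.mem_univ, true_and]
    constructor
    · rintro ⟨p, -, rfl⟩; exact p.2
    · intro h; exact ⟨⟨l, h⟩, rfl⟩
  have hset : {p : List A | D.IsPath s t p ∧ Q p} = ↑(PF.filter Q) := by
    ext l
    simp only [Set.mem_setOf_eq, Finset.coe_filter, Set.mem_setOf_eq, hmem]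
  rw [hset, finsum_mem_coe_finset, Finset.sum_filter,
    Finset.sum_subtype PF hmem (fun l => if Q l then f l else 0)]


end MRF

open MRF

/-- For a finite capacitated digraph with source `s`, sink `t` and
interdiction budget `k ≤ |A|`, the maximum robust flow value equals the randomized
network interdiction value, and both optima are attained.  The common optimal value `v`
is characterized by: some flow guarantees survival at least `v` against every failure of
`k` arcs; no flow guarantees more; some distribution `z` over the `k`-element failure
scenarios limits the best expected surviving flow to at most `v`; and no distribution does
better. -/
theorem mrf_value_eq_rni_value
    {V A : Type} [Fintype V] [Fintype A] [DecidableEq V] [DecidableEq A]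
    (D : MultiDigraph V A) (s t : V) (u : A → ℚ) (hu : ∀ a, 0 ≤ u a)
    (k : ℕ) (hk : k ≤ Fintype.card A) :
    ∃ v : ℚ,
      (∃ x : List A → ℚ, D.IsFlow s t u x ∧
        ∀ S ∈ Finset.powersetCard k (Finset.univ : Finset A),
          v ≤ D.survival s t x (S : Set A)) ∧
      (∀ x : List A → ℚ, D.IsFlow s t u x →
        ∃ S ∈ Finset.powersetCard k (Finset.univ : Finset A),
          D.survival s t x (S : Set A) ≤ v) ∧
      (∃ z : Finset A → ℚ,
        (∀ S, 0 ≤ z S ∧ z S ≤ 1) ∧ (∀ S, z S ≠ 0 → S.card = k) ∧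
        (∑ S ∈ Finset.powersetCard k (Finset.univ : Finset A), z S) = 1 ∧
        ∀ x : List A → ℚ, D.IsFlow s t u x →
          (∑ᶠ p ∈ D.pathSet s t,
            (1 - ∑ S ∈ (Finset.powersetCard k (Finset.univ : Finset A)).filter
              (fun S => ∃ a ∈ S, a ∈ p), z S) * x p) ≤ v) ∧
      (∀ z : Finset A → ℚ,
        (∀ S, 0 ≤ z S ∧ z S ≤ 1) → (∀ S, z S ≠ 0 → S.card = k) →
        (∑ S ∈ Finset.powersetCard k (Finset.univ : Finset A), z S) = 1 →
        ∃ x : List A → ℚ, D.IsFlow s t u x ∧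
          v ≤ ∑ᶠ p ∈ D.pathSet s t,
            (1 - ∑ S ∈ (Finset.powersetCard k (Finset.univ : Finset A)).filter
              (fun S => ∃ a ∈ S, a ∈ p), z S) * x p) := by
  classical
  haveI : Fintype {p : List A // D.IsPath s t p} := (pathSet_finite D s t).fintype
  -- abbreviations
  set PT := {p : List A // D.IsPath s t p} with hPT
  set SK := {S : Finset A // S.card = k} with hSK
  -- the LP data
  set Mat : (SK ⊕ A) → (PT ⊕ Fin 2) → ℚ :=
    Sum.elim
      (fun S => Sum.elim (fun p => if ∃ a ∈ S.1, a ∈ p.1 then 0 else -1)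
        (fun w => if w = 0 then 1 else -1))
      (fun a => Sum.elim (fun p => if a ∈ p.1 then 1 else 0) (fun _ => 0)) with hMat
  set bb : SK ⊕ A → ℚ := Sum.elim (fun _ => 0) u with hbb
  set cc : PT ⊕ Fin 2 → ℚ := Sum.elim (fun _ => 0) (fun w => if w = 0 then 1 else -1) with hcc
  -- nonemptiness of SK
  obtain ⟨S0, -, hS0⟩ := Finset.exists_subset_card_eq (s := (Finset.univ : Finset A)) (n := k)
    (by simpa using hk)
  have hSKne : Nonempty SK := ⟨⟨S0, hS0⟩⟩
  have hncard : 0 < Fintype.card SK := Fintype.card_pos_iff.mpr hSKne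
  set n : ℚ := (Fintype.card SK : ℚ) with hn
  have hnpos : (0:ℚ) < n := by rw [hn]; exact_mod_cast hncard
  -- primal feasibility (zero flow)
  have hP : ∃ x, PFeas Mat bb x := by
    refine ⟨fun _ => 0, fun j => le_refl 0, fun i => ?_⟩
    rcases i with S | a <;> simp [hbb, hu]
  -- dual feasibility (uniform distribution, unit arc prices)
  have hD : ∃ y, DFeas Mat cc y := by
    refine ⟨Sum.elim (fun _ => n⁻¹) (fun _ => 1), ?_, ?_⟩
    · rintro (S | a) <;> simp [inv_nonneg, hnpos.le]
    · rintro (p | w)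
      · -- path column
        simp only [hMat, hcc, Fintype.sum_sum_type, Sum.elim_inl, Sum.elim_inr]
        have h1 : -1 ≤ ∑ S : SK, n⁻¹ * (if ∃ a ∈ S.1, a ∈ p.1 then (0:ℚ) else -1) := by
          have hterm : ∀ S : SK, -(n⁻¹) ≤ n⁻¹ * (if ∃ a ∈ S.1, a ∈ p.1 then (0:ℚ) else -1) := by
            intro S
            have : (0:ℚ) ≤ n⁻¹ := inv_nonneg.mpr hnpos.le
            split <;> nlinarith
          calc (-1 : ℚ) = ∑ _S : SK, -(n⁻¹) := by
                rw [Finset.sum_const, Finset.card_univ, nsmul_eq_mul, hn]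
                field_simp
            _ ≤ _ := Finset.sum_le_sum fun S _ => hterm S
        have h2 : (1:ℚ) ≤ ∑ a : A, (1:ℚ) * (if a ∈ p.1 then 1 else 0) := by
          have hcard : 1 ≤ (p.1.toFinset.card : ℚ) := by
            have : p.1.toFinset.Nonempty := by
              rcases List.exists_mem_of_ne_nil p.1 (isPath_ne_nil D s t p.1 p.2) with ⟨a, ha⟩
              exact ⟨a, List.mem_toFinset.mpr ha⟩
            exact_mod_cast Finset.card_pos.mpr this
          calc (1:ℚ) ≤ (p.1.toFinset.card : ℚ) := hcard
            _ = ∑ a : A, (1:ℚ) * (if a ∈ p.1 then 1 else 0) := by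
              simp only [one_mul]
              rw [Finset.sum_boole]
              congr 1
              norm_cast
              congr 1
              ext a
              simp [List.mem_toFinset]
        linarith
      · -- the two value columns
        simp only [hMat, hcc, Fintype.sum_sum_type, Sum.elim_inl, Sum.elim_inr, mul_zero,
          Finset.sum_const_zero, add_zero, mul_one]
        rw [Finset.sum_const, Finset.card_univ, nsmul_eq_mul]
        set c : ℚ := if w = 0 then (1:ℚ) else -1 with hc
        have h3 : (Fintype.card SK : ℚ) * (n⁻¹ * c) = c := by
          rw [hn]; field_simp
        rw [h3]

  -- solve the LP
  obtain ⟨xs, ys, hxsF, hysF, heq⟩ := lp_strong_duality Mat bb cc hP hD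
  have hfin1 : ((1 : Fin 2) = 0) = False := eq_false (by decide)
  set v : ℚ := xs (Sum.inr 0) - xs (Sum.inr 1) with hv
  have hv1 : ∑ j, cc j * xs j = v := by
    simp only [hcc, Fintype.sum_sum_type, Fin.sum_univ_two, Sum.elim_inl, Sum.elim_inr,
      zero_mul, Finset.sum_const_zero, zero_add, hv]
    norm_num
    ring
  have hv2 : ∑ i, ys i * bb i = ∑ a, ys (Sum.inr a) * u a := by
    simp [hbb, Fintype.sum_sum_type]
  have hvy : v = ∑ a, ys (Sum.inr a) * u a := by rw [← hv1, heq, hv2]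
  -- bridging finsum and Finset sums
  have hbridge : ∀ (f : List A → ℚ) (Q : List A → Prop),
      ∑ᶠ p ∈ {p : List A | D.IsPath s t p ∧ Q p}, f p
        = ∑ p : PT, if Q p.1 then f p.1 else 0 := fun f Q => finsum_path_eq D s t f Q
  have hpath_eq : ∀ f : List A → ℚ, ∑ᶠ p ∈ D.pathSet s t, f p = ∑ p : PT, f p.1 := by
    intro f
    have h1 : D.pathSet s t = {p : List A | D.IsPath s t p ∧ True} := by
      ext p; exact ⟨fun h => ⟨h, trivial⟩, fun h => h.1⟩
    rw [h1, hbridge f (fun _ => True)]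
    simp
  have hsurv_eq : ∀ (x : List A → ℚ) (S : Finset A),
      D.survival s t x (S : Set A) = ∑ p : PT, if ¬∃ a ∈ S, a ∈ p.1 then x p.1 else 0 := by
    intro x S
    have h1 : {p : List A | D.IsPath s t p ∧ ∀ a ∈ (S : Set A), a ∉ p}
        = {p : List A | D.IsPath s t p ∧ ¬∃ a ∈ S, a ∈ p} := by
      ext p
      constructor
      · rintro ⟨h1, h2⟩; exact ⟨h1, fun ⟨a, ha, hap⟩ => h2 a (Finset.mem_coe.mpr ha) hap⟩
      · rintro ⟨h1, h2⟩; exact ⟨h1, fun a ha hap => h2 ⟨a, Finset.mem_coe.mp ha, hap⟩⟩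
    show ∑ᶠ p ∈ {p : List A | D.IsPath s t p ∧ ∀ a ∈ (S : Set A), a ∉ p}, x p = _
    rw [h1, hbridge]
    exact Finset.sum_congr rfl fun p _ => by congr
  have hcap_eq : ∀ (x : List A → ℚ) (a : A),
      ∑ᶠ p ∈ {p : List A | D.IsPath s t p ∧ a ∈ p}, x p
        = ∑ p : PT, if a ∈ p.1 then x p.1 else 0 := fun x a =>
      (hbridge x (fun p => a ∈ p)).trans (Finset.sum_congr rfl fun p _ => by congr)
  -- extraction of the scenario rows of the primal solution
  have hrow : ∀ (S : Finset A), S.card = k →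
      v ≤ ∑ p : PT, if ¬∃ a ∈ S, a ∈ p.1 then xs (Sum.inl p) else 0 := by
    intro S hSk
    have h := hxsF.2 (Sum.inl ⟨S, hSk⟩)
    simp only [hfin1, if_true, if_false, hMat, hbb, Fintype.sum_sum_type, Fin.sum_univ_two, Sum.elim_inl,
      Sum.elim_inr] at h
    have h2 : ∑ p : PT, (if ∃ a ∈ S, a ∈ p.1 then (0:ℚ) else -1) * xs (Sum.inl p)
        = -∑ p : PT, (if ¬∃ a ∈ S, a ∈ p.1 then xs (Sum.inl p) else 0) := by
      rw [← Finset.sum_neg_distrib]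
      refine Finset.sum_congr rfl fun p _ => ?_
      by_cases hmeet : ∃ a ∈ S, a ∈ p.1 <;> simp [hmeet]
    rw [h2] at h
    rw [hv]
    linarith
  -- the optimal primal flow
  set xStar : List A → ℚ := fun p => if h : D.IsPath s t p then xs (Sum.inl ⟨p, h⟩) else 0
    with hxS
  have hxStar_at : ∀ p : PT, xStar p.1 = xs (Sum.inl p) := by
    intro p; rw [hxS]; dsimp only; rw [dif_pos p.2]
  have hxStarFlow : D.IsFlow s t u xStar := by
    refine ⟨?_, ?_, ?_⟩
    · intro p; rw [hxS]; dsimp only; split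
      · exact hxsF.1 _
      · exact le_refl 0
    · intro p hp
      by_contra hnp
      rw [hxS] at hp; dsimp only at hp; rw [dif_neg hnp] at hp; exact hp rfl
    · intro a
      rw [hcap_eq]
      have h := hxsF.2 (Sum.inr a)
      simp only [hMat, hbb, Fintype.sum_sum_type, Fin.sum_univ_two, Sum.elim_inl, Sum.elim_inr,
        zero_mul, add_zero] at h
      have hc : ∑ p : PT, (if a ∈ p.1 then xStar p.1 else 0)
          = ∑ p : PT, (if a ∈ p.1 then (1:ℚ) else 0) * xs (Sum.inl p) := by
        refine Finset.sum_congr rfl fun p _ => ?_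
        rw [hxStar_at]; split <;> ring
      rw [hc]
      linarith
  refine ⟨v, ⟨xStar, hxStarFlow, ?_⟩, ?_, ?_, ?_⟩
  · -- Condition 1
    intro S hS
    have hc : ∑ p : PT, (if ¬∃ a ∈ S, a ∈ p.1 then xStar p.1 else 0)
        = ∑ p : PT, (if ¬∃ a ∈ S, a ∈ p.1 then xs (Sum.inl p) else 0) := by
      refine Finset.sum_congr rfl fun p _ => ?_
      split <;> [rw [hxStar_at]; rfl]
    rw [hsurv_eq, hc]
    exact hrow S (Finset.mem_powersetCard_univ.mp hS)
  · -- Condition 2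
    intro x hx
    have hne : (Finset.powersetCard k (Finset.univ : Finset A)).Nonempty :=
      ⟨S0, Finset.mem_powersetCard_univ.mpr hS0⟩
    obtain ⟨Smin, hSmin_mem, hSmin⟩ :=
      Finset.exists_min_image _ (fun S : Finset A => D.survival s t x (S : Set A)) hne
    refine ⟨Smin, hSmin_mem, ?_⟩
    set m := D.survival s t x (Smin : Set A) with hm
    set xv : PT ⊕ Fin 2 → ℚ :=
      Sum.elim (fun p => x p.1) (fun w => if w = 0 then max m 0 else max (-m) 0) with hxv
    have hmax : max m 0 - max (-m) 0 = m := by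
      rcases le_total m 0 with h | h
      · rw [max_eq_right h, max_eq_left (by linarith : (0:ℚ) ≤ -m)]; ring
      · rw [max_eq_left h, max_eq_right (by linarith : -m ≤ (0:ℚ))]; ring
    have hxvF : PFeas Mat bb xv := by
      constructor
      · rintro (p | w)
        · exact hx.1 p.1
        · simp only [hxv, Sum.elim_inr]; split <;> exact le_max_right _ _
      · rintro (⟨S, hSk⟩ | a)
        · have h2 : ∑ p : PT, (if ∃ a ∈ S, a ∈ p.1 then (0:ℚ) else -1) * x p.1
              = -∑ p : PT, (if ¬∃ a ∈ S, a ∈ p.1 then x p.1 else 0) := by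
            rw [← Finset.sum_neg_distrib]
            refine Finset.sum_congr rfl fun p _ => ?_
            by_cases hmeet : ∃ a ∈ S, a ∈ p.1 <;> simp [hmeet]
          have h3 : m ≤ ∑ p : PT, if ¬∃ a ∈ S, a ∈ p.1 then x p.1 else 0 := by
            rw [← hsurv_eq x S]
            exact hSmin S (Finset.mem_powersetCard_univ.mpr hSk)
          simp only [hfin1, if_true, if_false, hMat, hbb, hxv, Fintype.sum_sum_type, Fin.sum_univ_two, Sum.elim_inl,
            Sum.elim_inr]
          rw [h2]
          linarith
        · have h := hx.2.2 a
          rw [hcap_eq] at h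
          simp only [hMat, hbb, hxv, Fintype.sum_sum_type, Fin.sum_univ_two, Sum.elim_inl,
            Sum.elim_inr, zero_mul, add_zero]
          have hc : ∑ p : PT, (if a ∈ p.1 then (1:ℚ) else 0) * x p.1
              = ∑ p : PT, (if a ∈ p.1 then x p.1 else 0) := by
            refine Finset.sum_congr rfl fun p _ => ?_
            split <;> ring
          rw [hc]
          linarith
    have hwk := weak_duality Mat bb cc hxvF hysF
    have hcxv : ∑ j, cc j * xv j = m := by
      simp only [hfin1, if_true, if_false, hcc, hxv, Fintype.sum_sum_type, Fin.sum_univ_two, Sum.elim_inl, Sum.elim_inr,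
        zero_mul, Finset.sum_const_zero, zero_add]
      linarith
    show m ≤ v
    linarith [hwk, hcxv, hv2, hvy]
  · -- Condition 3
    set z : Finset A → ℚ := fun S => if h : S.card = k then ys (Sum.inl ⟨S, h⟩) else 0 with hz
    have hZsum : ∑ S : SK, ys (Sum.inl S) = 1 := by
      have h0 := hysF.2 (Sum.inr 0)
      have h1 := hysF.2 (Sum.inr 1)
      simp only [hfin1, if_true, if_false, hMat, hcc, Fintype.sum_sum_type, Sum.elim_inl, Sum.elim_inr, mul_zero,
        Finset.sum_const_zero, add_zero] at h0 h1
      have e0 : ∑ S : SK, ys (Sum.inl S) * (1:ℚ)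
          = ∑ S : SK, ys (Sum.inl S) := by
        refine Finset.sum_congr rfl fun S _ => ?_; ring
      have e1 : ∑ S : SK, ys (Sum.inl S) * (-1:ℚ)
          = -∑ S : SK, ys (Sum.inl S) := by
        rw [← Finset.sum_neg_distrib]
        refine Finset.sum_congr rfl fun S _ => ?_; ring
      rw [e0] at h0
      rw [e1] at h1
      linarith
    have hzsub : ∀ (g : Finset A → ℚ),
        ∑ S ∈ Finset.powersetCard k (Finset.univ : Finset A), g S = ∑ S : SK, g S.1 :=
      fun g => Finset.sum_subtype _ (fun S => Finset.mem_powersetCard_univ) g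
    have hzsum_pc : ∑ S ∈ Finset.powersetCard k (Finset.univ : Finset A), z S = 1 := by
      rw [hzsub z, ← hZsum]
      refine Finset.sum_congr rfl fun S _ => ?_
      rw [hz]; dsimp only; rw [dif_pos S.2]
    refine ⟨z, ?_, ?_, hzsum_pc, ?_⟩
    · intro S
      constructor
      · rw [hz]; dsimp only; split
        · exact hysF.1 _
        · exact le_refl 0
      · rw [hz]; dsimp only; split
        · rename_i hc
          calc ys (Sum.inl ⟨S, hc⟩) ≤ ∑ S : SK, ys (Sum.inl S) :=
                Finset.single_le_sum (fun S _ => hysF.1 (Sum.inl S)) (Finset.mem_univ _)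
            _ = 1 := hZsum
        · norm_num
    · intro S hSne
      by_contra hne
      rw [hz] at hSne; dsimp only at hSne; rw [dif_neg hne] at hSne; exact hSne rfl
    · intro x hx
      rw [hpath_eq]
      have hpoint : ∀ p : PT,
          (1 - ∑ S ∈ (Finset.powersetCard k (Finset.univ : Finset A)).filter
            (fun S => ∃ a ∈ S, a ∈ p.1), z S)
          ≤ ∑ a : A, ys (Sum.inr a) * (if a ∈ p.1 then (1:ℚ) else 0) := by
        intro p
        have hsplit : ∑ S ∈ (Finset.powersetCard k (Finset.univ : Finset A)).filter
              (fun S => ∃ a ∈ S, a ∈ p.1), z S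
            + ∑ S ∈ (Finset.powersetCard k (Finset.univ : Finset A)).filter
              (fun S => ¬∃ a ∈ S, a ∈ p.1), z S = 1 := by
          rw [Finset.sum_filter_add_sum_filter_not, hzsum_pc]
        have hsub : ∑ S ∈ (Finset.powersetCard k (Finset.univ : Finset A)).filter
              (fun S => ¬∃ a ∈ S, a ∈ p.1), z S
            = ∑ S : SK, (if ¬∃ a ∈ S.1, a ∈ p.1 then ys (Sum.inl S) else 0) := by
          rw [Finset.sum_filter, hzsub (fun S => if ¬∃ a ∈ S, a ∈ p.1 then z S else 0)]
          refine Finset.sum_congr rfl fun S _ => ?_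
          split <;> [skip; rfl]
          rw [hz]; dsimp only; rw [dif_pos S.2]
        have hdual := hysF.2 (Sum.inl p)
        simp only [hMat, hcc, Fintype.sum_sum_type, Sum.elim_inl, Sum.elim_inr] at hdual
        have e1 : ∑ S : SK, ys (Sum.inl S) * (if ∃ a ∈ S.1, a ∈ p.1 then (0:ℚ) else -1)
            = -∑ S : SK, (if ¬∃ a ∈ S.1, a ∈ p.1 then ys (Sum.inl S) else 0) := by
          rw [← Finset.sum_neg_distrib]
          refine Finset.sum_congr rfl fun S _ => ?_
          by_cases hm : ∃ a ∈ S.1, a ∈ p.1 <;> simp [hm]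
        rw [e1] at hdual
        linarith
      calc ∑ p : PT, (1 - ∑ S ∈ (Finset.powersetCard k (Finset.univ : Finset A)).filter
              (fun S => ∃ a ∈ S, a ∈ p.1), z S) * x p.1
          ≤ ∑ p : PT, (∑ a : A, ys (Sum.inr a) * (if a ∈ p.1 then (1:ℚ) else 0)) * x p.1 := by
            refine Finset.sum_le_sum fun p _ => ?_
            exact mul_le_mul_of_nonneg_right (hpoint p) (hx.1 p.1)
        _ = ∑ a : A, ys (Sum.inr a) * ∑ p : PT, (if a ∈ p.1 then (1:ℚ) else 0) * x p.1 := by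
            exact swap_mul (fun a : A => ys (Sum.inr a))
              (fun (a : A) (p : PT) => if a ∈ p.1 then 1 else 0) (fun p : PT => x p.1)
        _ ≤ ∑ a : A, ys (Sum.inr a) * u a := by
            refine Finset.sum_le_sum fun a _ => mul_le_mul_of_nonneg_left ?_ (hysF.1 _)
            have h := hx.2.2 a
            rw [hcap_eq] at h
            have hc : ∑ p : PT, (if a ∈ p.1 then (1:ℚ) else 0) * x p.1
                = ∑ p : PT, (if a ∈ p.1 then x p.1 else 0) := by
              refine Finset.sum_congr rfl fun p _ => ?_
              split <;> ring
            rw [hc]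
            exact h
        _ = v := hvy.symm
  · -- Condition 4
    intro z hz01 hzk hz1
    refine ⟨xStar, hxStarFlow, ?_⟩
    rw [hpath_eq]
    have hpt : ∀ p : PT,
        (1 - ∑ S ∈ (Finset.powersetCard k (Finset.univ : Finset A)).filter
          (fun S => ∃ a ∈ S, a ∈ p.1), z S)
        = ∑ S ∈ Finset.powersetCard k (Finset.univ : Finset A),
            (if ¬∃ a ∈ S, a ∈ p.1 then z S else 0) := by
      intro p
      rw [← Finset.sum_filter]
      have h := Finset.sum_filter_add_sum_filter_not
        (Finset.powersetCard k (Finset.univ : Finset A)) (fun S => ∃ a ∈ S, a ∈ p.1) z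
      rw [hz1] at h
      linarith
    have hgoal : ∑ p : PT, (1 - ∑ S ∈ (Finset.powersetCard k (Finset.univ : Finset A)).filter
            (fun S => ∃ a ∈ S, a ∈ p.1), z S) * xStar p.1
        = ∑ S ∈ Finset.powersetCard k (Finset.univ : Finset A),
            z S * ∑ p : PT, (if ¬∃ a ∈ S, a ∈ p.1 then xs (Sum.inl p) else 0) := by
      calc ∑ p : PT, (1 - ∑ S ∈ (Finset.powersetCard k (Finset.univ : Finset A)).filter
              (fun S => ∃ a ∈ S, a ∈ p.1), z S) * xStar p.1
          = ∑ p : PT, ∑ S ∈ Finset.powersetCard k (Finset.univ : Finset A),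
              (if ¬∃ a ∈ S, a ∈ p.1 then z S else 0) * xStar p.1 := by
            refine Finset.sum_congr rfl fun p _ => ?_
            rw [hpt p, Finset.sum_mul]
        _ = ∑ S ∈ Finset.powersetCard k (Finset.univ : Finset A), ∑ p : PT,
              (if ¬∃ a ∈ S, a ∈ p.1 then z S else 0) * xStar p.1 := Finset.sum_comm
        _ = ∑ S ∈ Finset.powersetCard k (Finset.univ : Finset A),
              z S * ∑ p : PT, (if ¬∃ a ∈ S, a ∈ p.1 then xs (Sum.inl p) else 0) := by
            refine Finset.sum_congr rfl fun S _ => ?_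
            rw [Finset.mul_sum]
            refine Finset.sum_congr rfl fun p _ => ?_
            by_cases hm : ¬∃ a ∈ S, a ∈ p.1
            · rw [if_pos hm, if_pos hm, hxStar_at]
            · rw [if_neg hm, if_neg hm, zero_mul, mul_zero]
    rw [hgoal]
    calc v = ∑ S ∈ Finset.powersetCard k (Finset.univ : Finset A), z S * v := by
          rw [← Finset.sum_mul, hz1, one_mul]
      _ ≤ ∑ S ∈ Finset.powersetCard k (Finset.univ : Finset A),
            z S * ∑ p : PT, (if ¬∃ a ∈ S, a ∈ p.1 then xs (Sum.inl p) else 0) :=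
          Finset.sum_le_sum fun S hS =>
            mul_le_mul_of_nonneg_left (hrow S (Finset.mem_powersetCard_univ.mp hS)) ((hz01 S).1)
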